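/- Let P be a probability measure on ℝ^k with location T_P. For every α > 0 the scatter halfspace depth region R(α) = {Σ ∈ 𝒫_k : HD_P(Σ) ≥ α} is bounded in Frobenius norm: there exists r > 0 with ‖Σ − I_k‖_F < r for every Σ ∈ R(α). -/

import Mathlib

open MeasureTheory Matrix

/-- Largest "eigenvalue" via the Rayleigh quotient (equals the largest eigenvalue
for symmetric matrices). -/
noncomputable def lamMax {k : ℕ} (A : Matrix (Fin k) (Fin k) ℝ) : ℝ :=
  ⨆ u : {u : Fin k → ℝ // u ⬝ᵥ u = 1}, u.1 ⬝ᵥ A *ᵥ u.1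

/-- Smallest "eigenvalue" via the Rayleigh quotient. -/
noncomputable def lamMin {k : ℕ} (A : Matrix (Fin k) (Fin k) ℝ) : ℝ :=
  ⨅ u : {u : Fin k → ℝ // u ⬝ᵥ u = 1}, u.1 ⬝ᵥ A *ᵥ u.1

/-- The scatter halfspace depth of a scatter matrix `Sg` w.r.t. the probability
measure `P`, with location `T`. -/
noncomputable def HD {k : ℕ} (P : Measure (Fin k → ℝ)) (T : Fin k → ℝ)
    (Sg : Matrix (Fin k) (Fin k) ℝ) : ℝ :=
  ⨅ u : {u : Fin k → ℝ // u ⬝ᵥ u = 1},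
    min (P {x | |u.1 ⬝ᵥ (x - T)| ≤ Real.sqrt (u.1 ⬝ᵥ Sg *ᵥ u.1)}).toReal
        (P {x | Real.sqrt (u.1 ⬝ᵥ Sg *ᵥ u.1) ≤ |u.1 ⬝ᵥ (x - T)|}).toReal

/-- Matrix square root via the continuous functional calculus. -/
noncomputable def msqrt {k : ℕ} (A : Matrix (Fin k) (Fin k) ℝ) : Matrix (Fin k) (Fin k) ℝ :=
  cfc Real.sqrt A

/-- Matrix logarithm via the continuous functional calculus. -/
noncomputable def mlog {k : ℕ} (A : Matrix (Fin k) (Fin k) ℝ) : Matrix (Fin k) (Fin k) ℝ :=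
  cfc Real.log A

/-- Matrix real power via the continuous functional calculus. -/
noncomputable def mpow {k : ℕ} (A : Matrix (Fin k) (Fin k) ℝ) (t : ℝ) :
    Matrix (Fin k) (Fin k) ℝ :=
  cfc (fun x : ℝ => x ^ t) A

/-- The geodesic path from `A` to `B` in the space of positive definite matrices. -/
noncomputable def geoPath {k : ℕ} (A B : Matrix (Fin k) (Fin k) ℝ) (t : ℝ) :
    Matrix (Fin k) (Fin k) ℝ :=
  msqrt A * mpow ((msqrt A)⁻¹ * B * (msqrt A)⁻¹) t * msqrt A

/-- The harmonic path from `A` to `B`. -/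
noncomputable def harmPath {k : ℕ} (A B : Matrix (Fin k) (Fin k) ℝ) (t : ℝ) :
    Matrix (Fin k) (Fin k) ℝ :=
  ((1 - t) • A⁻¹ + t • B⁻¹)⁻¹

/-- Frobenius norm of a matrix. -/
noncomputable def frob {k : ℕ} (A : Matrix (Fin k) (Fin k) ℝ) : ℝ :=
  Real.sqrt (∑ i, ∑ j, (A i j) ^ 2)

/-- Geodesic distance on the space of positive definite matrices. -/
noncomputable def dg {k : ℕ} (A B : Matrix (Fin k) (Fin k) ℝ) : ℝ :=
  frob (mlog ((msqrt A)⁻¹ * B * (msqrt A)⁻¹))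

/-- Sign vectors in `{-1,1}^k`. -/
def SignVec (k : ℕ) := {s : Fin k → ℝ // ∀ i, s i = 1 ∨ s i = -1}


lemma posSemidef_entry_sq_le {k : ℕ} {S : Matrix (Fin k) (Fin k) ℝ} (hS : S.PosSemidef)
    (i j : Fin k) : (S i j) ^ 2 ≤ S i i * S j j := by
  rcases eq_or_ne i j with rfl | hij
  · rw [sq]
  · have hsym : S j i = S i j := by simpa using hS.1.apply i j
    have hQ : ∀ t : ℝ, 0 ≤ S i i * (t * t) + (2 * S i j) * t + S j j := by
      intro t
      have hval : (t • (Pi.single i 1 : Fin k → ℝ) + Pi.single j 1) ⬝ᵥ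
          S *ᵥ (t • (Pi.single i 1 : Fin k → ℝ) + Pi.single j 1)
          = S i i * (t * t) + (2 * S i j) * t + S j j := by
        simp [add_dotProduct, smul_dotProduct, mulVec_add, mulVec_smul, dotProduct_add,
          dotProduct_smul, single_dotProduct, Matrix.mulVec_single, Pi.single_apply,
          hij, hij.symm, hsym]
        ring
      rw [← hval]
      simpa only [star_trivial, RCLike.re_to_real] using
        hS.dotProduct_mulVec_nonneg (t • (Pi.single i 1 : Fin k → ℝ) + Pi.single j 1)
    have hd := discrim_le_zero hQ
    rw [discrim] at hd
    nlinarith [hd]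

lemma posSemidef_diag_nonneg {k : ℕ} {S : Matrix (Fin k) (Fin k) ℝ} (hS : S.PosSemidef)
    (i : Fin k) : 0 ≤ S i i := by
  have : (Pi.single i 1 : Fin k → ℝ) ⬝ᵥ S *ᵥ Pi.single i 1 = S i i := by
    simp [single_dotProduct, Matrix.mulVec_single]
  rw [← this]
  simpa only [star_trivial, RCLike.re_to_real] using hS.dotProduct_mulVec_nonneg (Pi.single i 1 : Fin k → ℝ)

theorem HD_region_F_bounded' {k : ℕ} (P : Measure (Fin k → ℝ)) [IsProbabilityMeasure P]
    (T : Fin k → ℝ) (α : ℝ) (hα : 0 < α) :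
    ∃ r > (0 : ℝ), ∀ Sg : Matrix (Fin k) (Fin k) ℝ, Sg.PosDef →
      α ≤ (⨅ u : {u : Fin k → ℝ // u ⬝ᵥ u = 1},
        min (P {x | |u.1 ⬝ᵥ (x - T)| ≤ Real.sqrt (u.1 ⬝ᵥ Sg *ᵥ u.1)}).toReal
            (P {x | Real.sqrt (u.1 ⬝ᵥ Sg *ᵥ u.1) ≤ |u.1 ⬝ᵥ (x - T)|}).toReal) →
      Real.sqrt (∑ i, ∑ j, ((Sg - 1) i j) ^ 2) < r := by
  set A : ℕ → Set (Fin k → ℝ) := fun n => {x | (n : ℝ) ≤ dist x T} with hA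
  have hmeas : ∀ n, NullMeasurableSet (A n) P := fun n =>
    (isClosed_le continuous_const
      (continuous_id.dist continuous_const)).measurableSet.nullMeasurableSet
  have hanti : Antitone A := by
    intro n m h x hx
    have hx' : (m : ℝ) ≤ dist x T := hx
    show (n : ℝ) ≤ dist x T
    exact le_trans (Nat.cast_le.2 h) hx'
  have hempty : ⋂ n, A n = ∅ := by
    ext x
    simp only [Set.mem_iInter, Set.mem_empty_iff_false, iff_false, not_forall]
    obtain ⟨n, hn⟩ := exists_nat_gt (dist x T)
    exact ⟨n, by simpa [hA] using not_le.2 hn⟩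
  have htend : Filter.Tendsto (P ∘ A) Filter.atTop (nhds 0) := by
    have := tendsto_measure_iInter_atTop hmeas hanti ⟨0, measure_ne_top P _⟩
    rwa [hempty, measure_empty] at this
  obtain ⟨n, hn⟩ : ∃ n, P (A n) < ENNReal.ofReal α :=
    (htend.eventually_lt_const (ENNReal.ofReal_pos.2 hα)).exists
  set M : ℝ := (n : ℝ) with hM
  have hM0 : 0 ≤ M := Nat.cast_nonneg n
  refine ⟨(k : ℝ) * (M ^ 2 + 1) + 1, by positivity, fun Sg hSg hHD => ?_⟩
  by_contra hcon
  push_neg at hcon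
  have hexists : ∃ i, M ^ 2 < Sg i i := by
    by_contra hno
    push_neg at hno
    have hbound : ∀ i j, ((Sg - 1) i j) ^ 2 ≤ (M ^ 2 + 1) ^ 2 := by
      intro i j
      have h1 : (Sg i j) ^ 2 ≤ M ^ 2 * M ^ 2 :=
        le_trans (posSemidef_entry_sq_le hSg.posSemidef i j)
          (mul_le_mul (hno i) (hno j) (posSemidef_diag_nonneg hSg.posSemidef j) (by positivity))
      have hdiff : (Sg - 1) i j = Sg i j - (1 : Matrix (Fin k) (Fin k) ℝ) i j := rfl
      rcases eq_or_ne i j with rfl | hij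
      · rw [hdiff, Matrix.one_apply_eq]
        have h0 := posSemidef_diag_nonneg hSg.posSemidef i
        nlinarith [hno i, h0, sq_nonneg M]
      · rw [hdiff, Matrix.one_apply_ne hij, sub_zero]
        nlinarith [sq_nonneg M]
    have hsum : ∑ i, ∑ j, ((Sg - 1) i j) ^ 2 ≤ (k : ℝ) ^ 2 * (M ^ 2 + 1) ^ 2 := by
      calc ∑ i, ∑ j, ((Sg - 1) i j) ^ 2
          ≤ ∑ _i : Fin k, ∑ _j : Fin k, (M ^ 2 + 1) ^ 2 :=
            Finset.sum_le_sum fun i _ => Finset.sum_le_sum fun j _ => hbound i j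
        _ = (k : ℝ) ^ 2 * (M ^ 2 + 1) ^ 2 := by
            simp [Finset.sum_const, Finset.card_univ]
            ring
    have hfle : Real.sqrt (∑ i, ∑ j, ((Sg - 1) i j) ^ 2) ≤ (k : ℝ) * (M ^ 2 + 1) := by
      calc Real.sqrt (∑ i, ∑ j, ((Sg - 1) i j) ^ 2)
          ≤ Real.sqrt ((k : ℝ) ^ 2 * (M ^ 2 + 1) ^ 2) := Real.sqrt_le_sqrt hsum
        _ = (k : ℝ) * (M ^ 2 + 1) := by
            rw [show (k : ℝ) ^ 2 * (M ^ 2 + 1) ^ 2 = ((k : ℝ) * (M ^ 2 + 1)) ^ 2 by ring,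
              Real.sqrt_sq (by positivity)]
    linarith
  obtain ⟨i, hi⟩ := hexists
  have hbdd : BddBelow (Set.range fun u : {u : Fin k → ℝ // u ⬝ᵥ u = 1} =>
      min (P {x | |u.1 ⬝ᵥ (x - T)| ≤ Real.sqrt (u.1 ⬝ᵥ Sg *ᵥ u.1)}).toReal
          (P {x | Real.sqrt (u.1 ⬝ᵥ Sg *ᵥ u.1) ≤ |u.1 ⬝ᵥ (x - T)|}).toReal) :=
    ⟨0, by rintro y ⟨u, rfl⟩; exact le_min ENNReal.toReal_nonneg ENNReal.toReal_nonneg⟩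
  have huu : (Pi.single i 1 : Fin k → ℝ) ⬝ᵥ Pi.single i 1 = 1 := by
    simp [single_dotProduct]
  set u : {u : Fin k → ℝ // u ⬝ᵥ u = 1} := ⟨Pi.single i 1, huu⟩ with hu
  have hα2 : α ≤ (P {x | Real.sqrt (u.1 ⬝ᵥ Sg *ᵥ u.1) ≤ |u.1 ⬝ᵥ (x - T)|}).toReal :=
    le_trans (le_trans hHD (ciInf_le hbdd u)) (min_le_right _ _)
  have hsub : {x | Real.sqrt (u.1 ⬝ᵥ Sg *ᵥ u.1) ≤ |u.1 ⬝ᵥ (x - T)|} ⊆ A n := by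
    intro x hx
    have hq : u.1 ⬝ᵥ Sg *ᵥ u.1 = Sg i i := by
      simp [hu, single_dotProduct, Matrix.mulVec_single]
    have hdot : u.1 ⬝ᵥ (x - T) = x i - T i := by
      simp [hu, single_dotProduct, Pi.sub_apply]
    have hx' : Real.sqrt (Sg i i) ≤ |x i - T i| := by
      have : Real.sqrt (u.1 ⬝ᵥ Sg *ᵥ u.1) ≤ |u.1 ⬝ᵥ (x - T)| := hx
      rwa [hq, hdot] at this
    have hMs : M ≤ Real.sqrt (Sg i i) := by
      rw [show M = Real.sqrt (M ^ 2) from (Real.sqrt_sq hM0).symm]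
      exact Real.sqrt_le_sqrt hi.le
    have hdist : |x i - T i| ≤ dist x T := by
      have := dist_le_pi_dist x T i
      rwa [Real.dist_eq] at this
    show (n : ℝ) ≤ dist x T
    calc (n : ℝ) = M := rfl
      _ ≤ |x i - T i| := le_trans hMs hx'
      _ ≤ dist x T := hdist
  have hfin : (P {x | Real.sqrt (u.1 ⬝ᵥ Sg *ᵥ u.1) ≤ |u.1 ⬝ᵥ (x - T)|}).toReal < α := by
    have h1 : P {x | Real.sqrt (u.1 ⬝ᵥ Sg *ᵥ u.1) ≤ |u.1 ⬝ᵥ (x - T)|} < ENNReal.ofReal α :=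
      lt_of_le_of_lt (measure_mono hsub) hn
    exact (ENNReal.lt_ofReal_iff_toReal_lt (measure_ne_top P _)).1 h1
  linarith

/-- for every `α > 0`, the scatter halfspace depth region `R(α)` is
bounded in Frobenius norm. -/
theorem HD_region_F_bounded {k : ℕ} (P : Measure (Fin k → ℝ)) [IsProbabilityMeasure P]
    (T : Fin k → ℝ) (α : ℝ) (hα : 0 < α) :
    ∃ r > (0 : ℝ), ∀ Sg : Matrix (Fin k) (Fin k) ℝ, Sg.PosDef →
      α ≤ HD P T Sg → frob (Sg - 1) < r := by
  unfold HD frob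
  exact HD_region_F_bounded' P T α hα
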